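/- The underlying graph of the reduction construction — the graph on star vertices v_0,...,v_{n−1} and path vertices p_0,...,p_Q with edges: all star edges {v_0, v_j}, all path edges {p_j, p_{j+1}}, the edge {v_0, p_0}, and edges {v_j, p_{L·(j+2)}} for j = 0,...,n−1 — has pathwidth at most 2. -/
import Mathlib


/-- A path decomposition of a simple graph. -/
structure PathDecomp {V : Type*} (G : SimpleGraph V) where
  r : ℕ
  bag : Fin r → Set V
  covers_vertex : ∀ v : V, ∃ i, v ∈ bag i
  covers_edge : ∀ v w : V, G.Adj v w → ∃ i, v ∈ bag i ∧ w ∈ bag i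
  interval : ∀ i j k : Fin r, i ≤ j → j ≤ k → ∀ v : V, v ∈ bag i → v ∈ bag k → v ∈ bag j

/-- The underlying graph of the reduction (star edges `{v_0, v_j}`, path edges
`{p_j, p_{j+1}}`, the edge `{v_0, p_0}`, and the attachment edges
`{v_j, p_{L·(j+2)}}`) has pathwidth at most 2. -/
theorem underlying_graph_pathwidth_le_two (L n Q : ℕ) (hL : 1 ≤ L) (hn : 1 ≤ n)
    (hQ : Q = L * (n + 3))
    (G : SimpleGraph (Fin n ⊕ Fin (Q + 1)))
    (hG : G = SimpleGraph.fromRel (fun x y =>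
      (∃ j : Fin n, x = Sum.inl ⟨0, by omega⟩ ∧ y = Sum.inl j) ∨
      (∃ i j : Fin (Q + 1), x = Sum.inr i ∧ y = Sum.inr j ∧ i.val + 1 = j.val) ∨
      (x = Sum.inl ⟨0, by omega⟩ ∧ y = Sum.inr ⟨0, by omega⟩) ∨
      (∃ j : Fin n, x = Sum.inl j ∧
        y = Sum.inr ⟨L * (j.val + 2), by nlinarith [j.isLt]⟩))) :
    ∃ d : PathDecomp G, ∀ i, Set.ncard (d.bag i) ≤ 2 + 1 := by
  classical
  subst hG
  have hb : ∀ j : Fin n, L * (j.val + 2) ≤ Q := by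
    intro j
    have hj := j.isLt
    calc L * (j.val + 2) ≤ L * (n + 3) := Nat.mul_le_mul_left _ (by omega)
      _ = Q := hQ.symm
  set bag : Fin (2 * (Q + 1)) → Set (Fin n ⊕ Fin (Q + 1)) := fun i =>
    {x | x = Sum.inl ⟨0, by omega⟩ ∨
      (∃ k : Fin (Q + 1), x = Sum.inr k ∧
        (i.val = 2 * k.val ∨ i.val = 2 * k.val + 1 ∨ i.val + 1 = 2 * k.val)) ∨
      (∃ j : Fin n, x = Sum.inl j ∧ i.val = 2 * (L * (j.val + 2)))} with hbag
  have hcv : ∀ v : Fin n ⊕ Fin (Q + 1), ∃ i, v ∈ bag i := by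
    rintro (j | k)
    · exact ⟨⟨2 * (L * (j.val + 2)), by have := hb j; omega⟩,
        Or.inr (Or.inr ⟨j, rfl, rfl⟩)⟩
    · exact ⟨⟨2 * k.val, by have := k.isLt; omega⟩,
        Or.inr (Or.inl ⟨k, rfl, Or.inl rfl⟩)⟩
  have go : ∀ a b : Fin n ⊕ Fin (Q + 1),
      ((∃ j : Fin n, a = Sum.inl ⟨0, by omega⟩ ∧ b = Sum.inl j) ∨
       (∃ i j : Fin (Q + 1), a = Sum.inr i ∧ b = Sum.inr j ∧ i.val + 1 = j.val) ∨
       (a = Sum.inl ⟨0, by omega⟩ ∧ b = Sum.inr ⟨0, by omega⟩) ∨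
       (∃ j : Fin n, a = Sum.inl j ∧
         b = Sum.inr ⟨L * (j.val + 2), by nlinarith [j.isLt]⟩)) →
      ∃ i, a ∈ bag i ∧ b ∈ bag i := by
    rintro a b (⟨j, rfl, rfl⟩ | ⟨u, v, rfl, rfl, huv⟩ | ⟨rfl, rfl⟩ | ⟨j, rfl, rfl⟩)
    · exact ⟨⟨2 * (L * (j.val + 2)), by have := hb j; omega⟩,
        Or.inl rfl, Or.inr (Or.inr ⟨j, rfl, rfl⟩)⟩
    · refine ⟨⟨2 * u.val + 1, by have := v.isLt; omega⟩, ?_, ?_⟩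
      · exact Or.inr (Or.inl ⟨u, rfl, Or.inr (Or.inl rfl)⟩)
      · exact Or.inr (Or.inl ⟨v, rfl, Or.inr (Or.inr (by simp only [Fin.val_mk]; omega))⟩)
    · exact ⟨⟨0, by omega⟩, Or.inl rfl,
        Or.inr (Or.inl ⟨⟨0, by omega⟩, rfl, Or.inl rfl⟩)⟩
    · refine ⟨⟨2 * (L * (j.val + 2)), by have := hb j; omega⟩, ?_, ?_⟩
      · exact Or.inr (Or.inr ⟨j, rfl, rfl⟩)
      · exact Or.inr (Or.inl ⟨_, rfl, Or.inl rfl⟩)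
  have hint : ∀ i j k : Fin (2 * (Q + 1)), i ≤ j → j ≤ k →
      ∀ v, v ∈ bag i → v ∈ bag k → v ∈ bag j := by
    intro i j k hij hjk v hvi hvk
    rcases hvi with h1 | ⟨a, rfl, ha⟩ | ⟨a, rfl, ha⟩
    · exact Or.inl h1
    · rcases hvk with h1 | ⟨b, hb', hbk⟩ | ⟨b, hb', -⟩
      · exact absurd h1 (by simp)
      · obtain rfl : a = b := Sum.inr.inj hb'
        refine Or.inr (Or.inl ⟨a, rfl, ?_⟩)
        have h1 := Fin.le_def.mp hij
        have h2 := Fin.le_def.mp hjk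
        omega
      · exact absurd hb' (by simp)
    · rcases hvk with h1 | ⟨b, hb', -⟩ | ⟨b, hb', hbk⟩
      · exact Or.inl h1
      · exact absurd hb' (by simp)
      · obtain rfl : a = b := Sum.inl.inj hb'
        refine Or.inr (Or.inr ⟨a, rfl, ?_⟩)
        have h1 := Fin.le_def.mp hij
        have h2 := Fin.le_def.mp hjk
        omega
  refine ⟨⟨2 * (Q + 1), bag, hcv, ?_, hint⟩, ?_⟩
  · intro v w hadj
    rw [SimpleGraph.fromRel_adj] at hadj
    obtain ⟨-, h | h⟩ := hadj
    · exact go v w h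
    · obtain ⟨i, h1, h2⟩ := go w v h
      exact ⟨i, h2, h1⟩
  have htriple : ∀ a b c : Fin n ⊕ Fin (Q + 1), ({a, b, c} : Set _).ncard ≤ 2 + 1 := by
    intro a b c
    calc ({a, b, c} : Set _).ncard ≤ ({b, c} : Set _).ncard + 1 := Set.ncard_insert_le _ _
      _ ≤ ({c} : Set _).ncard + 1 + 1 := Nat.add_le_add_right (Set.ncard_insert_le _ _) 1
      _ = 2 + 1 := by rw [Set.ncard_singleton]
  intro i
  have hi : i.val < 2 * (Q + 1) := i.isLt
  show (bag i).ncard ≤ 2 + 1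
  by_cases hpar : i.val % 2 = 0
  · by_cases hat : ∃ j : Fin n, i.val = 2 * (L * (j.val + 2))
    · obtain ⟨j0, hj0⟩ := hat
      have hsub : bag i ⊆ {Sum.inl ⟨0, by omega⟩,
          Sum.inr ⟨i.val / 2, by omega⟩, Sum.inl j0} := by
        rintro x (h | ⟨k, rfl, hk⟩ | ⟨j, rfl, hj⟩)
        · exact Or.inl h
        · refine Or.inr (Or.inl ?_)
          congr 1
          apply Fin.ext
          simp only
          omega
        · refine Or.inr (Or.inr ?_)
          have : j = j0 := by
            apply Fin.ext
            have := Nat.eq_of_mul_eq_mul_left (by omega : 0 < L)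
              (show L * (j.val + 2) = L * (j0.val + 2) by omega)
            omega
          simp [this]
      exact (Set.ncard_le_ncard hsub
        (((Set.finite_singleton _).insert _).insert _)).trans (htriple _ _ _)
    · have hsub : bag i ⊆ {Sum.inl ⟨0, by omega⟩,
          Sum.inr ⟨i.val / 2, by omega⟩, Sum.inr ⟨i.val / 2, by omega⟩} := by
        rintro x (h | ⟨k, rfl, hk⟩ | ⟨j, rfl, hj⟩)
        · exact Or.inl h
        · refine Or.inr (Or.inl ?_)
          congr 1
          apply Fin.ext
          simp only
          omega
        · exact absurd ⟨j, hj⟩ hat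
      exact (Set.ncard_le_ncard hsub
        (((Set.finite_singleton _).insert _).insert _)).trans (htriple _ _ _)
  · have hsub : bag i ⊆ {Sum.inl ⟨0, by omega⟩,
        Sum.inr ⟨i.val / 2, by omega⟩,
        Sum.inr ⟨min ((i.val + 1) / 2) Q, by omega⟩} := by
      rintro x (h | ⟨k, rfl, hk⟩ | ⟨j, rfl, hj⟩)
      · exact Or.inl h
      · rcases hk with hk | hk | hk
        · omega
        · refine Or.inr (Or.inl ?_)
          congr 1
          apply Fin.ext
          simp only
          omega
        · refine Or.inr (Or.inr ?_)
          congr 1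
          apply Fin.ext
          have := k.isLt
          simp only
          omega
      · omega
    exact (Set.ncard_le_ncard hsub
      (((Set.finite_singleton _).insert _).insert _)).trans (htriple _ _ _)
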